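/- arXiv:1509.07728 — 3 statements merged into one kernel-verified Lean document; each statement's English description precedes it below -/
import Mathlib

section
/- Let β ≤ 1/(2(1+exp(R))). For any w₁, w₂ in the ball B_R = {w ∈ ℝ^d : ‖w‖₂ ≤ R}, any x ∈ ℝ^d with ‖x‖₂ ≤ 1, and any y ∈ {-1, +1}, the logistic loss f(w) = log(1+exp(-y·⟨x,w⟩)) satisfies f(w₂) ≥ f(w₁) + ⟨∇f(w₁), w₂ - w₁⟩ + (β/2)·(⟨x, w₂ - w₁⟩)². -/
open Real

lemma phi_hasDerivAt (β t : ℝ) :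
    HasDerivAt (fun t : ℝ => log (1 + exp (-t)) - β / 2 * t ^ 2)
      (-(exp (-t) / (1 + exp (-t))) - β * t) t := by
  have h1 : (0:ℝ) < 1 + exp (-t) := by positivity
  have hlog : HasDerivAt (fun t : ℝ => log (1 + exp (-t)))
      (-(exp (-t) / (1 + exp (-t)))) t := by
    have : HasDerivAt (fun t : ℝ => 1 + exp (-t)) (-exp (-t)) t := by
      simpa using (((hasDerivAt_id t).neg.exp).const_add 1)
    simpa [neg_div] using (this.log h1.ne')
  have hq : HasDerivAt (fun t : ℝ => β / 2 * t ^ 2) (β * t) t := by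
    have := ((hasDerivAt_pow 2 t).const_mul (β / 2))
    refine this.congr_deriv ?_
    push_cast
    ring
  exact hlog.sub hq

lemma phi'_hasDerivAt (β t : ℝ) :
    HasDerivAt (fun t : ℝ => -(exp (-t) / (1 + exp (-t))) - β * t)
      (exp (-t) / (1 + exp (-t)) ^ 2 - β) t := by
  have h1 : (0:ℝ) < 1 + exp (-t) := by positivity
  have hnum : HasDerivAt (fun t : ℝ => exp (-t)) (-exp (-t)) t := by
    simpa using ((hasDerivAt_id t).neg.exp)
  have hden : HasDerivAt (fun t : ℝ => 1 + exp (-t)) (-exp (-t)) t := by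
    simpa using (hnum.const_add 1)
  have hdiv := hnum.div hden h1.ne'
  have hlin : HasDerivAt (fun t : ℝ => β * t) β t := by
    simpa using (hasDerivAt_id t).const_mul β
  have := (hdiv.neg).sub hlin
  refine this.congr_deriv ?_
  field_simp
  ring

lemma second_deriv_ge (R β t : ℝ) (hR : 0 < R) (hβ : β ≤ 1 / (2 * (1 + exp R)))
    (ht : t ∈ Set.Icc (-R) R) : 0 ≤ exp (-t) / (1 + exp (-t)) ^ 2 - β := by
  set u := exp (-t) with hu
  set E := exp R with hE
  have hupos : 0 < u := exp_pos _
  have hEpos : 0 < E := exp_pos _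
  have hE1 : 1 ≤ E := by rw [hE]; simpa using exp_le_exp.2 hR.le
  have hul : exp (-R) ≤ u := by rw [hu]; exact exp_le_exp.2 (by linarith [ht.2])
  have huu : u ≤ E := by rw [hu, hE]; exact exp_le_exp.2 (by linarith [ht.1])
  have hprod : exp (-R) * E = 1 := by rw [hE, ← exp_add]; simp
  have hkey : 1 / (2 * (1 + E)) ≤ u / (1 + u) ^ 2 := by
    rw [div_le_div_iff₀ (by positivity) (by positivity)]
    nlinarith [mul_nonneg (sub_nonneg.2 hul) (sub_nonneg.2 huu), exp_pos (-R)]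
  have : β ≤ u / (1 + u) ^ 2 := le_trans hβ hkey
  linarith

lemma convex_first_order {S : Set ℝ} {f : ℝ → ℝ} {f' : ℝ → ℝ}
    (hfc : ConvexOn ℝ S f) (hfd : ∀ t ∈ S, HasDerivAt f (f' t) t)
    {a b : ℝ} (ha : a ∈ S) (hb : b ∈ S) :
    f a + f' a * (b - a) ≤ f b := by
  rcases lt_trichotomy a b with h | h | h
  · have := hfc.le_slope_of_hasDerivAt ha hb h (hfd a ha)
    rw [slope_def_field] at this
    have hba : 0 < b - a := by linarith
    have := (le_div_iff₀ hba).1 this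
    linarith
  · simp [h]
  · have := hfc.slope_le_of_hasDerivAt hb ha h (hfd a ha)
    rw [slope_def_field] at this
    have hab : 0 < a - b := by linarith
    have := (div_le_iff₀ hab).1 this
    linarith

lemma key_1d (R β t₁ t₂ : ℝ) (hR : 0 < R) (hβ : β ≤ 1 / (2 * (1 + exp R)))
    (h1 : t₁ ∈ Set.Icc (-R) R) (h2 : t₂ ∈ Set.Icc (-R) R) :
    log (1 + exp (-t₁)) + (-(exp (-t₁) / (1 + exp (-t₁)))) * (t₂ - t₁)
      + β / 2 * (t₂ - t₁) ^ 2 ≤ log (1 + exp (-t₂)) := by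
  set φ : ℝ → ℝ := fun t => log (1 + exp (-t)) - β / 2 * t ^ 2 with hφ
  set φ' : ℝ → ℝ := fun t => -(exp (-t) / (1 + exp (-t))) - β * t with hφ'
  have hconv : ConvexOn ℝ (Set.Icc (-R) R) φ := by
    refine convexOn_of_hasDerivWithinAt2_nonneg (convex_Icc _ _)
      (fun t _ => (phi_hasDerivAt β t).continuousAt.continuousWithinAt)
      (fun t _ => (phi_hasDerivAt β t).hasDerivWithinAt)
      (fun t _ => (phi'_hasDerivAt β t).hasDerivWithinAt)
      (fun t ht => second_deriv_ge R β t hR hβ (interior_subset ht))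
  have H := convex_first_order hconv (fun t _ => phi_hasDerivAt β t) h1 h2
  simp only [hφ, hφ'] at H
  nlinarith [H]

/-- Strong-convexity-type lower bound for the logistic loss
f(w) = log(1+exp(-y⟨x,w⟩)) on the ball of radius R:
f(w₂) ≥ f(w₁) + ⟨∇f(w₁), w₂-w₁⟩ + (β/2)⟨x, w₂-w₁⟩², with
∇f(w₁) = -y·(exp(-y⟨x,w₁⟩)/(1+exp(-y⟨x,w₁⟩)))·x. -/
theorem logistic_loss_exp_concave (R : ℝ) (hR : 0 < R) (d : ℕ) (hd : 1 ≤ d)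
    (x : EuclideanSpace ℝ (Fin d)) (hx : ‖x‖ ≤ 1)
    (y : ℝ) (hy : y = -1 ∨ y = 1)
    (β : ℝ) (hβ : β ≤ 1 / (2 * (1 + exp R)))
    (w₁ w₂ : EuclideanSpace ℝ (Fin d)) (hw₁ : ‖w₁‖ ≤ R) (hw₂ : ‖w₂‖ ≤ R) :
    log (1 + exp (-(y * inner ℝ x w₂))) ≥
      log (1 + exp (-(y * inner ℝ x w₁)))
      + inner ℝ ((-(y * (exp (-(y * inner ℝ x w₁)) / (1 + exp (-(y * inner ℝ x w₁)))))) • x)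
          (w₂ - w₁)
      + (β / 2) * (inner ℝ x (w₂ - w₁) : ℝ) ^ 2 := by
  have hy2 : y ^ 2 = 1 := by rcases hy with h | h <;> simp [h]
  set t₁ : ℝ := y * inner ℝ x w₁ with ht₁
  set t₂ : ℝ := y * inner ℝ x w₂ with ht₂
  have habs : ∀ w : EuclideanSpace ℝ (Fin d), ‖w‖ ≤ R → |y * (inner ℝ x w : ℝ)| ≤ R := by
    intro w hw
    have h1 : |(inner ℝ x w : ℝ)| ≤ ‖x‖ * ‖w‖ := abs_real_inner_le_norm x w
    have h2 : ‖x‖ * ‖w‖ ≤ 1 * R := by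
      apply mul_le_mul hx hw (norm_nonneg _) zero_le_one
    have hya : |y| = 1 := by rcases hy with h | h <;> simp [h]
    rw [abs_mul, hya, one_mul]
    linarith
  have h1 : t₁ ∈ Set.Icc (-R) R := abs_le.1 (habs w₁ hw₁)
  have h2 : t₂ ∈ Set.Icc (-R) R := abs_le.1 (habs w₂ hw₂)
  have key := key_1d R β t₁ t₂ hR hβ h1 h2
  have hinner : (inner ℝ x (w₂ - w₁) : ℝ) = inner ℝ x w₂ - (inner ℝ x w₁ : ℝ) :=
    inner_sub_right x w₂ w₁
  have hsmul : (inner ℝ ((-(y * (exp (-t₁) / (1 + exp (-t₁))))) • x) (w₂ - w₁) : ℝ)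
      = (-(y * (exp (-t₁) / (1 + exp (-t₁))))) * (inner ℝ x (w₂ - w₁) : ℝ) :=
    real_inner_smul_left x (w₂ - w₁) _
  rw [ge_iff_le, hsmul, hinner]
  have hyt : y * ((inner ℝ x w₂ : ℝ) - inner ℝ x w₁) = t₂ - t₁ := by rw [ht₁, ht₂]; ring
  rw [← hyt] at key
  have e1 : (y * ((inner ℝ x w₂ : ℝ) - inner ℝ x w₁)) ^ 2
      = ((inner ℝ x w₂ : ℝ) - inner ℝ x w₁) ^ 2 := by
    rw [mul_pow, hy2, one_mul]
  have e2 : β / 2 * (y * ((inner ℝ x w₂ : ℝ) - inner ℝ x w₁)) ^ 2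
      = β / 2 * ((inner ℝ x w₂ : ℝ) - inner ℝ x w₁) ^ 2 := by rw [e1]
  linarith [key, e2]
end

section
/- Let Z₁ = λI, Z_{t+1} = Z_t + c·x_t x_tᵀ with λ, c > 0 and ‖x_t‖₂ ≤ 1. Then Σ_{t=1}^T min(c·‖x_t‖²_{Z_t⁻¹}, 1) ≤ 2·log(det(Z_{T+1})/det(Z₁)). -/
open Real Matrix Finset

lemma min_le_two_log_aux {u : ℝ} (hu : 0 ≤ u) : min u 1 ≤ 2 * Real.log (1 + u) := by
  rcases le_or_gt u 1 with h | h
  · rw [min_eq_left h]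
    have h1 : (0:ℝ) < 1 + u := by linarith
    have h2 : Real.log (1 + u)⁻¹ ≤ (1 + u)⁻¹ - 1 :=
      Real.log_le_sub_one_of_pos (by positivity)
    rw [Real.log_inv] at h2
    have h3 : 1 - (1 + u)⁻¹ ≤ Real.log (1 + u) := by linarith
    have h4 : (1 + u)⁻¹ ≤ 1 - u / 2 := by
      rw [inv_le_iff_one_le_mul₀ h1]
      nlinarith
    linarith
  · rw [min_eq_right h.le]
    have h2 : Real.log 2 ≤ Real.log (1 + u) :=
      Real.log_le_log (by norm_num) (by linarith)
    have := Real.log_two_gt_d9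
    linarith

/-- With Z₁ = λI and Z_{t+1} = Z_t + c·x_t x_tᵀ, ‖x_t‖ ≤ 1,
Σ_{t=1}^T min(c‖x_t‖²_{Z_t⁻¹}, 1) ≤ 2·log(det Z_{T+1}/det Z₁). -/
theorem sum_min_le_log_det (d : ℕ) (lam c : ℝ) (hlam : 0 < lam) (hc : 0 < c)
    (x : ℕ → Fin d → ℝ) (hx : ∀ t, ‖(EuclideanSpace.equiv (Fin d) ℝ).symm (x t)‖ ≤ 1)
    (Z : ℕ → Matrix (Fin d) (Fin d) ℝ)
    (hZ1 : Z 1 = lam • (1 : Matrix (Fin d) (Fin d) ℝ))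
    (hZrec : ∀ t ≥ 1, Z (t + 1) = Z t + c • vecMulVec (x t) (x t)) (T : ℕ) :
    ∑ t ∈ Finset.Icc 1 T, min (c * (x t ⬝ᵥ (Z t)⁻¹.mulVec (x t))) 1
      ≤ 2 * log ((Z (T + 1)).det / (Z 1).det) := by
  -- positive semidefiniteness of the rank-one updates
  have hpsd : ∀ t, (c • vecMulVec (x t) (x t)).PosSemidef := by
    intro t
    have h1 : (vecMulVec (x t) (x t)).PosSemidef := by
      rw [Matrix.vecMulVec_eq Unit]
      have h2 := Matrix.posSemidef_self_mul_conjTranspose (Matrix.replicateCol Unit (x t))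
      rwa [Matrix.conjTranspose_replicateCol, star_trivial] at h2
    refine Matrix.PosSemidef.of_dotProduct_mulVec_nonneg ?_ ?_
    · show (c • vecMulVec (x t) (x t))ᴴ = _
      rw [Matrix.conjTranspose_smul, star_trivial, h1.1]
    · intro y
      have h3 := h1.dotProduct_mulVec_nonneg y
      simp only [Matrix.smul_mulVec, dotProduct_smul, smul_eq_mul]
      positivity
  -- all Z t, t ≥ 1, are positive definite
  have hpd : ∀ t, 1 ≤ t → (Z t).PosDef := by
    intro t ht
    induction t with
    | zero => omega
    | succ n ih =>
      rcases Nat.lt_or_ge 1 (n + 1) with h | h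
      · have hn : 1 ≤ n := by omega
        rw [hZrec n hn]
        exact (ih hn).add_posSemidef (hpsd n)
      · have : n + 1 = 1 := by omega
        rw [this, hZ1, Matrix.smul_one_eq_diagonal]
        exact Matrix.PosDef.diagonal (fun _ => hlam)
  -- determinant recursion
  have hdet : ∀ t, 1 ≤ t →
      (Z (t + 1)).det = (Z t).det * (1 + c * (x t ⬝ᵥ (Z t)⁻¹.mulVec (x t))) := by
    intro t ht
    have hA : IsUnit (Z t).det := isUnit_iff_ne_zero.mpr (ne_of_gt (hpd t ht).det_pos)
    have heq : Z (t + 1) = Z t + Matrix.replicateCol Unit (c • x t) * Matrix.replicateRow Unit (x t) := by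
      rw [hZrec t ht, ← Matrix.vecMulVec_eq Unit]
      congr 1
      ext i j
      simp [vecMulVec_apply, mul_assoc]
    rw [heq, Matrix.det_add_replicateCol_mul_replicateRow hA]
    congr 1
    rw [Matrix.det_unique]
    simp only [Matrix.add_apply, Matrix.one_apply_eq, Matrix.mul_apply, Matrix.replicateRow_apply,
      Matrix.replicateCol_apply, Pi.smul_apply, smul_eq_mul, Matrix.mulVec, dotProduct]
    congr 1
    simp_rw [Finset.sum_mul, Finset.mul_sum]
    rw [Finset.sum_comm]
    apply Finset.sum_congr rfl; intro i _
    apply Finset.sum_congr rfl; intro j _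
    ring
  -- nonnegativity of the quadratic forms
  have hnn : ∀ t, 1 ≤ t → 0 ≤ c * (x t ⬝ᵥ (Z t)⁻¹.mulVec (x t)) := by
    intro t ht
    have h := ((hpd t ht).inv).posSemidef.dotProduct_mulVec_nonneg (x t)
    simp only [RCLike.star_def, starRingEnd_apply, star_trivial] at h
    positivity
  -- main induction
  induction T with
  | zero =>
    have h0 : (Z (0 + 1)).det / (Z 1).det = 1 :=
      div_self (ne_of_gt (hpd 1 le_rfl).det_pos)
    simp [h0]
  | succ n ih =>
    rcases Nat.lt_or_ge n 1 with h | h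
    · interval_cases n
      rw [show Finset.Icc 1 1 = {1} from rfl, Finset.sum_singleton,
        hdet 1 le_rfl]
      have hd1 : (0:ℝ) < (Z 1).det := (hpd 1 le_rfl).det_pos
      have he : (Z 1).det * (1 + c * (x 1 ⬝ᵥ (Z 1)⁻¹.mulVec (x 1))) / (Z 1).det
          = 1 + c * (x 1 ⬝ᵥ (Z 1)⁻¹.mulVec (x 1)) := by field_simp
      rw [he]
      exact min_le_two_log_aux (hnn 1 le_rfl)
    · rw [Finset.sum_Icc_succ_top (by omega : 1 ≤ n + 1)]
      have hd1 : (0:ℝ) < (Z 1).det := (hpd 1 le_rfl).det_pos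
      have hdn : (0:ℝ) < (Z (n + 1)).det := (hpd (n+1) (by omega)).det_pos
      have hu := hnn (n + 1) (by omega)
      have hlog : log ((Z (n + 2)).det / (Z 1).det)
          = log ((Z (n + 1)).det / (Z 1).det)
            + log (1 + c * (x (n+1) ⬝ᵥ (Z (n+1))⁻¹.mulVec (x (n+1)))) := by
        rw [show n + 2 = (n + 1) + 1 from rfl, hdet (n + 1) (by omega),
          mul_comm, mul_div_assoc, Real.log_mul (ne_of_gt (by linarith))
          (ne_of_gt (by positivity))]
        ring
      have hmin := min_le_two_log_aux hu
      calc ∑ t ∈ Finset.Icc 1 n, min (c * (x t ⬝ᵥ (Z t)⁻¹.mulVec (x t))) 1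
            + min (c * (x (n+1) ⬝ᵥ (Z (n+1))⁻¹.mulVec (x (n+1)))) 1
          ≤ 2 * log ((Z (n + 1)).det / (Z 1).det)
            + 2 * log (1 + c * (x (n+1) ⬝ᵥ (Z (n+1))⁻¹.mulVec (x (n+1)))) :=
            add_le_add ih hmin
        _ = 2 * log ((Z (n + 2)).det / (Z 1).det) := by rw [hlog]; ring
end

section
/- Let X₁,…,X_n be a martingale difference sequence with |X_i| ≤ K and conditional variance sum Σ_n² = Σ_{t=1}^n E[X_t²|F_{t-1}]. Then for all ν, t > 0: P[max_{i≤n} S_i > √(2νt) + (2/3)Kt and Σ_n² ≤ ν] ≤ e^{-t}, where S_i = Σ_{j≤i} X_j. -/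
open MeasureTheory Finset Nat

lemma factorial_ge_two_mul (n : ℕ) : 2 * 3 ^ n ≤ (n + 2) ! := by
  induction n with
  | zero => simp [Nat.factorial]
  | succ k ih =>
      rw [pow_succ, Nat.factorial_succ]
      calc 2 * (3 ^ k * 3) = 3 * (2 * 3 ^ k) := by ring
        _ ≤ (k + 2 + 1) * (k + 2) ! := Nat.mul_le_mul (by omega) ih

lemma exp_taylor_bound {l K x : ℝ} (hl : 0 < l) (hK : 0 < K) (hlK : l * K < 3)
    (hx : |x| ≤ K) :
    Real.exp (l * x) ≤ 1 + l * x + l ^ 2 / (2 * (1 - l * K / 3)) * x ^ 2 := by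
  have hsum : Summable (fun n : ℕ => (l * x) ^ n / n !) :=
    Real.summable_pow_div_factorial (l * x)
  have hsum2 : Summable (fun n : ℕ => (l * x) ^ (n + 2) / (n + 2) !) :=
    (summable_nat_add_iff 2).2 hsum
  have hr : l * K / 3 < 1 := by linarith
  have hr0 : 0 ≤ l * K / 3 := by positivity
  have hgeom : Summable (fun n : ℕ => l ^ 2 * x ^ 2 / 2 * (l * K / 3) ^ n) :=
    (summable_geometric_of_lt_one hr0 hr).mul_left _
  have hexp : Real.exp (l * x) = ∑' n : ℕ, (l * x) ^ n / n ! := by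
    rw [Real.exp_eq_exp_ℝ, NormedSpace.exp_eq_tsum_div]
  have hsplit : ∑' n : ℕ, (l * x) ^ n / n ! =
      (∑ i ∈ Finset.range 2, (l * x) ^ i / i !) +
        ∑' n : ℕ, (l * x) ^ (n + 2) / (n + 2) ! := (Summable.sum_add_tsum_nat_add 2 hsum).symm
  have hterm : ∀ n : ℕ, (l * x) ^ (n + 2) / (n + 2) ! ≤
      l ^ 2 * x ^ 2 / 2 * (l * K / 3) ^ n := by
    intro n
    have h1 : (l * x) ^ (n + 2) ≤ |l * x| ^ (n + 2) := le_abs_self _ |>.trans (by rw [abs_pow])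
    have habs : |l * x| ^ (n + 2) = l ^ (n + 2) * |x| ^ (n + 2) := by
      rw [abs_mul, mul_pow, abs_of_pos hl]
    have hx2 : |x| ^ (n + 2) ≤ x ^ 2 * K ^ n := by
      have h : |x| ^ (n + 2) = |x| ^ 2 * |x| ^ n := by ring
      rw [h, sq_abs]
      exact mul_le_mul_of_nonneg_left (pow_le_pow_left₀ (abs_nonneg x) hx n) (by positivity)
    have hfac : (2 * 3 ^ n : ℝ) ≤ ((n + 2) ! : ℝ) := by
      exact_mod_cast factorial_ge_two_mul n
    have hnum : (l * x) ^ (n + 2) ≤ l ^ (n + 2) * (x ^ 2 * K ^ n) := by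
      calc (l * x) ^ (n + 2) ≤ l ^ (n + 2) * |x| ^ (n + 2) := by rw [← habs]; exact h1
        _ ≤ _ := mul_le_mul_of_nonneg_left hx2 (by positivity)
    have hfacpos : (0 : ℝ) < ((n + 2) ! : ℝ) := by positivity
    rw [div_le_iff₀ hfacpos]
    calc (l * x) ^ (n + 2) ≤ l ^ (n + 2) * (x ^ 2 * K ^ n) := hnum
      _ = l ^ 2 * x ^ 2 / 2 * (l * K / 3) ^ n * (2 * 3 ^ n) := by
          rw [div_pow, pow_add, mul_pow]
          field_simp
      _ ≤ _ := mul_le_mul_of_nonneg_left hfac (by positivity)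
  have htail : ∑' n : ℕ, (l * x) ^ (n + 2) / (n + 2) ! ≤
      l ^ 2 * x ^ 2 / 2 * (1 - l * K / 3)⁻¹ := by
    calc ∑' n : ℕ, (l * x) ^ (n + 2) / (n + 2) ! ≤
        ∑' n : ℕ, l ^ 2 * x ^ 2 / 2 * (l * K / 3) ^ n := Summable.tsum_le_tsum hterm hsum2 hgeom
      _ = l ^ 2 * x ^ 2 / 2 * (1 - l * K / 3)⁻¹ := by
          rw [tsum_mul_left, tsum_geometric_of_lt_one hr0 hr]
  have hpos : (0:ℝ) < 1 - l * K / 3 := by linarith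
  have heq : l ^ 2 * x ^ 2 / 2 * (1 - l * K / 3)⁻¹ =
      l ^ 2 / (2 * (1 - l * K / 3)) * x ^ 2 := by
    field_simp
  rw [hexp, hsplit]
  have h2 : ∑ i ∈ Finset.range 2, (l * x) ^ i / i ! = 1 + l * x := by
    norm_num [Finset.sum_range_succ]
  rw [h2]
  linarith [htail]

set_option maxHeartbeats 2000000

/-- Bernstein's (Freedman's) inequality for martingales: if (X_i) is a
martingale difference sequence with |X_i| ≤ K, S_i = Σ_{j≤i} X_j and
Σ_n² = Σ_{i=1}^n E[X_i²|F_{i-1}], then for all ν, t > 0,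
P[max_{i≤n} S_i > √(2νt) + (2/3)Kt and Σ_n² ≤ ν] ≤ e^{-t}. -/
theorem bernstein_inequality_for_martingales
    {Ω : Type*} {m0 : MeasurableSpace Ω} (μ : Measure Ω) [IsProbabilityMeasure μ]
    (ℱ : Filtration ℕ m0) (n : ℕ) (X : ℕ → Ω → ℝ) (K : ℝ) (hK : 0 < K)
    (hadapted : ∀ i, StronglyMeasurable[ℱ i] (X i))
    (hmds : ∀ i ∈ Finset.Icc 1 n, μ[X i | ℱ (i - 1)] =ᵐ[μ] 0)
    (hbdd : ∀ i ∈ Finset.Icc 1 n, ∀ᵐ ω ∂μ, |X i ω| ≤ K)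
    (ν t : ℝ) (hν : 0 < ν) (ht : 0 < t) :
    μ {ω | (∃ i ∈ Finset.Icc 1 n,
              ∑ j ∈ Finset.Icc 1 i, X j ω > Real.sqrt (2 * ν * t) + (2 / 3) * K * t)
          ∧ ∑ i ∈ Finset.Icc 1 n, (μ[fun ω' => X i ω' ^ 2 | ℱ (i - 1)]) ω ≤ ν}
      ≤ ENNReal.ofReal (Real.exp (-t)) := by
  -- numeric setup
  set x₀ : ℝ := Real.sqrt (2 * ν * t) + 2 / 3 * K * t with hx₀def
  set a : ℝ := Real.sqrt (2 * t / ν) with hadef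
  have ha : 0 < a := Real.sqrt_pos.2 (by positivity)
  have ha2 : a ^ 2 = 2 * t / ν := Real.sq_sqrt (by positivity)
  have hden : (0:ℝ) < 1 + a * K / 3 := by positivity
  set l : ℝ := a / (1 + a * K / 3) with hldef
  have hl : 0 < l := div_pos ha hden
  have hlK : l * K < 3 := by
    rw [hldef, div_mul_eq_mul_div, div_lt_iff₀ hden]
    nlinarith
  have hpos3 : (0:ℝ) < 1 - l * K / 3 := by
    rw [hldef, div_mul_eq_mul_div]
    rw [sub_pos, div_div, div_lt_one (by positivity)]
    nlinarith
  set c : ℝ := l ^ 2 / (2 * (1 - l * K / 3)) with hcdef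
  have hc : 0 ≤ c := by positivity
  have hsqrt : a * Real.sqrt (2 * ν * t) = 2 * t := by
    rw [hadef, ← Real.sqrt_mul (by positivity)]
    have h : 2 * t / ν * (2 * ν * t) = (2 * t) ^ 2 := by field_simp
    rw [h, Real.sqrt_sq (by positivity)]
  have hlx : l * x₀ = 2 * t := by
    rw [hldef, hx₀def, div_mul_eq_mul_div, div_eq_iff hden.ne']
    nlinarith [hsqrt]
  have hcν : c * ν ≤ t := by
    have h1 : 1 - l * K / 3 = 1 / (1 + a * K / 3) := by
      rw [hldef]; field_simp; ring
    have ha2' : a ^ 2 * ν = 2 * t := by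
      rw [ha2]; field_simp
    have h2 : c * ν = t / (1 + a * K / 3) := by
      rw [hcdef, h1, hldef]
      rw [div_pow]
      field_simp
      nlinarith [ha2', sq_nonneg (3 + a * K)]
    rw [h2]
    rw [div_le_iff₀ hden]
    nlinarith [mul_pos (mul_pos ha hK) ht]
  have hexpo : t ≤ l * x₀ - c * ν := by linarith
  -- processes
  set V : ℕ → Ω → ℝ := fun j => μ[fun ω => X j ω ^ 2 | ℱ (j - 1)] with hVdef
  set S : ℕ → Ω → ℝ := fun i ω => ∑ j ∈ Finset.Icc 1 (min i n), X j ω with hSdef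
  set Q : ℕ → Ω → ℝ := fun i ω => ∑ j ∈ Finset.Icc 1 (min i n), V j ω with hQdef
  set M : ℕ → Ω → ℝ := fun i ω => Real.exp (l * S i ω - c * Q i ω) with hMdef
  have hSmeas : ∀ i, StronglyMeasurable[ℱ i] (S i) := by
    intro i
    apply Finset.stronglyMeasurable_fun_sum
    intro j hj
    exact (hadapted j).mono (ℱ.mono ((Finset.mem_Icc.1 hj).2.trans (min_le_left i n)))
  have hVmeas : ∀ j, StronglyMeasurable[ℱ (j - 1)] (V j) := fun j => stronglyMeasurable_condExp
  have hQmeas : ∀ i, StronglyMeasurable[ℱ i] (Q i) := by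
    intro i
    apply Finset.stronglyMeasurable_fun_sum
    intro j hj
    exact (hVmeas j).mono (ℱ.mono (by
      have := (Finset.mem_Icc.1 hj).2
      omega))
  have hMmeas : ∀ i, StronglyMeasurable[ℱ i] (M i) := by
    intro i
    exact Real.continuous_exp.comp_stronglyMeasurable
      (((hSmeas i).const_mul l).sub ((hQmeas i).const_mul c))
  -- a.e. bounds
  have hballX : ∀ᵐ ω ∂μ, ∀ j, j ∈ Finset.Icc 1 n → |X j ω| ≤ K := by
    rw [ae_all_iff]
    intro j
    by_cases hj : j ∈ Finset.Icc 1 n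
    · filter_upwards [hbdd j hj] with ω h _ using h
    · exact Filter.Eventually.of_forall fun ω h => absurd h hj
  have hballV : ∀ᵐ ω ∂μ, ∀ j, 0 ≤ V j ω := by
    rw [ae_all_iff]
    intro j
    exact condExp_nonneg (Filter.Eventually.of_forall fun ω => sq_nonneg _)
  have hMbdd : ∀ i, ∀ᵐ ω ∂μ, ‖M i ω‖ ≤ Real.exp (l * (n * K)) := by
    intro i
    filter_upwards [hballX, hballV] with ω hX hV
    have hS : |S i ω| ≤ n * K := by
      show |∑ j ∈ Finset.Icc 1 (min i n), X j ω| ≤ (n : ℝ) * K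
      calc |∑ j ∈ Finset.Icc 1 (min i n), X j ω| ≤ ∑ j ∈ Finset.Icc 1 (min i n), |X j ω| :=
            Finset.abs_sum_le_sum_abs _ _
        _ ≤ ∑ _j ∈ Finset.Icc 1 (min i n), K := by
            apply Finset.sum_le_sum
            intro j hj
            apply hX j
            rw [Finset.mem_Icc] at hj ⊢
            exact ⟨hj.1, hj.2.trans (min_le_right i n)⟩
        _ = (Finset.Icc 1 (min i n)).card * K := by rw [Finset.sum_const, nsmul_eq_mul]
        _ ≤ n * K := by
            apply mul_le_mul_of_nonneg_right _ hK.le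
            have : (Finset.Icc 1 (min i n)).card ≤ n := by
              rw [Nat.card_Icc]
              omega
            exact_mod_cast this
    have hQ : 0 ≤ Q i ω := Finset.sum_nonneg fun j _ => hV j
    have hMeq : M i ω = Real.exp (l * S i ω - c * Q i ω) := rfl
    rw [hMeq, Real.norm_eq_abs, abs_of_pos (Real.exp_pos _)]
    apply Real.exp_le_exp.2
    have h9 : l * S i ω ≤ l * (n * K) := by
      apply mul_le_mul_of_nonneg_left _ hl.le
      exact (le_abs_self _).trans hS
    linarith [mul_nonneg hc hQ]
  have hMint : ∀ i, Integrable (M i) μ := fun i =>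
    Integrable.mono' (integrable_const _)
      ((hMmeas i).mono (ℱ.le i)).aestronglyMeasurable (hMbdd i)
  have hXint : ∀ j ∈ Finset.Icc 1 n, Integrable (X j) μ := by
    intro j hj
    apply Integrable.mono' (integrable_const K)
      ((hadapted j).mono (ℱ.le j)).aestronglyMeasurable
    filter_upwards [hbdd j hj] with ω h using h
  have hX2int : ∀ j ∈ Finset.Icc 1 n, Integrable (fun ω => X j ω ^ 2) μ := by
    intro j hj
    apply Integrable.mono' (integrable_const (K ^ 2))
      (((hadapted j).mono (ℱ.le j)).pow 2).aestronglyMeasurable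
    filter_upwards [hbdd j hj] with ω h
    show ‖X j ω ^ 2‖ ≤ K ^ 2
    rw [Real.norm_eq_abs, abs_pow, sq_abs, ← sq_abs]
    exact pow_le_pow_left₀ (abs_nonneg _) h 2
  have hexpint : ∀ j ∈ Finset.Icc 1 n, Integrable (fun ω => Real.exp (l * X j ω)) μ := by
    intro j hj
    apply Integrable.mono' (integrable_const (Real.exp (l * K)))
      (Real.continuous_exp.comp_stronglyMeasurable
        (((hadapted j).mono (ℱ.le j)).const_mul l)).aestronglyMeasurable
    filter_upwards [hbdd j hj] with ω h
    rw [Real.norm_eq_abs, abs_of_pos (Real.exp_pos _)]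
    exact Real.exp_le_exp.2 (mul_le_mul_of_nonneg_left ((le_abs_self _).trans h) hl.le)
  -- one-step conditional bound
  have hstep : ∀ j, j ∈ Finset.Icc 1 n →
      μ[fun ω => Real.exp (l * X j ω) | ℱ (j - 1)] ≤ᵐ[μ] fun ω => Real.exp (c * V j ω) := by
    intro j hj
    have hpt : (fun ω => Real.exp (l * X j ω)) ≤ᵐ[μ]
        (fun ω => 1 + l * X j ω + c * X j ω ^ 2) := by
      filter_upwards [hbdd j hj] with ω h
      exact exp_taylor_bound hl hK hlK h
    have hrint : Integrable (fun ω => 1 + l * X j ω + c * X j ω ^ 2) μ := by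
      apply Integrable.add
      apply Integrable.add (integrable_const 1)
      · exact (hXint j hj).const_mul l
      · exact (hX2int j hj).const_mul c
    have h1 : μ[fun ω => Real.exp (l * X j ω) | ℱ (j - 1)] ≤ᵐ[μ]
        μ[fun ω => 1 + l * X j ω + c * X j ω ^ 2 | ℱ (j - 1)] :=
      condExp_mono (hexpint j hj) hrint hpt
    have h2 : μ[fun ω => 1 + l * X j ω + c * X j ω ^ 2 | ℱ (j - 1)] =ᵐ[μ]
        fun ω => 1 + c * V j ω := by
      have e1 : (fun ω => 1 + l * X j ω + c * X j ω ^ 2) =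
          (fun _ => (1:ℝ)) + (l • X j + c • fun ω => X j ω ^ 2) := by
        funext ω; simp [Pi.add_apply]; ring
      rw [e1]
      calc μ[(fun _ => (1:ℝ)) + (l • X j + c • fun ω => X j ω ^ 2) | ℱ (j - 1)]
          =ᵐ[μ] μ[(fun _ => (1:ℝ)) | ℱ (j - 1)] + μ[l • X j + c • fun ω => X j ω ^ 2 | ℱ (j - 1)] :=
            condExp_add (integrable_const 1) (((hXint j hj).smul l).add ((hX2int j hj).smul c)) _
        _ =ᵐ[μ] fun ω => 1 + c * V j ω := by
            have h3 : μ[l • X j + c • fun ω => X j ω ^ 2 | ℱ (j - 1)] =ᵐ[μ]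
                μ[l • X j | ℱ (j - 1)] + μ[c • fun ω => X j ω ^ 2 | ℱ (j - 1)] :=
              condExp_add ((hXint j hj).smul l) ((hX2int j hj).smul c) _
            have h4 : μ[l • X j | ℱ (j - 1)] =ᵐ[μ] l • μ[X j | ℱ (j - 1)] := condExp_smul l _ _
            have h5 : μ[c • fun ω => X j ω ^ 2 | ℱ (j - 1)] =ᵐ[μ]
                c • μ[fun ω => X j ω ^ 2 | ℱ (j - 1)] := condExp_smul c _ _
            have h6 := hmds j hj
            have e7 : μ[(fun _ => (1:ℝ)) | ℱ (j - 1)] = fun _ => (1:ℝ) :=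
              condExp_const (ℱ.le (j - 1)) (1:ℝ)
            filter_upwards [h3, h4, h5, h6] with ω e3 e4 e5 e6
            show (μ[(fun _ => (1:ℝ)) | ℱ (j - 1)]) ω
                + (μ[l • X j + c • fun ω => X j ω ^ 2 | ℱ (j - 1)]) ω = 1 + c * V j ω
            rw [congrFun e7 ω, e3, Pi.add_apply, e4, e5, Pi.smul_apply, Pi.smul_apply,
              smul_eq_mul, smul_eq_mul, e6]
            show 1 + (l * 0 + c * V j ω) = 1 + c * V j ω
            ring
    refine h1.trans (h2.le.trans (Filter.Eventually.of_forall fun ω => ?_))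
    show (1:ℝ) + c * V j ω ≤ Real.exp (c * V j ω)
    linarith [Real.add_one_le_exp (c * V j ω)]
  -- supermartingale property
  have hsuper : Supermartingale M ℱ μ := by
    apply supermartingale_nat hMmeas hMint
    intro i
    by_cases hin : i < n
    · -- active step
      have hmin1 : min (i + 1) n = i + 1 := min_eq_left (by omega)
      have hmini : min i n = i := min_eq_left (by omega)
      have hQsucc : ∀ ω, Q (i + 1) ω = Q i ω + V (i + 1) ω := by
        intro ω
        show (∑ j ∈ Finset.Icc 1 (min (i+1) n), V j ω) =
          (∑ j ∈ Finset.Icc 1 (min i n), V j ω) + V (i+1) ω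
        rw [hmin1, hmini, Finset.sum_Icc_succ_top (by omega : 1 ≤ i + 1)]
      have hSsucc : ∀ ω, S (i + 1) ω = S i ω + X (i + 1) ω := by
        intro ω
        show (∑ j ∈ Finset.Icc 1 (min (i+1) n), X j ω) =
          (∑ j ∈ Finset.Icc 1 (min i n), X j ω) + X (i+1) ω
        rw [hmin1, hmini, Finset.sum_Icc_succ_top (by omega : 1 ≤ i + 1)]
      set G : Ω → ℝ := fun ω => Real.exp (l * S i ω - c * Q (i + 1) ω) with hGdef
      have hGmeas : StronglyMeasurable[ℱ i] G := by
        apply Real.continuous_exp.comp_stronglyMeasurable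
        apply ((hSmeas i).const_mul l).sub
        apply StronglyMeasurable.const_mul _ c
        apply Finset.stronglyMeasurable_fun_sum
        intro j hj
        refine (hVmeas j).mono (ℱ.mono ?_)
        have h1 := (Finset.mem_Icc.1 hj).2
        have h2 : min (i + 1) n = i + 1 := hmin1
        omega
      have hdecomp : M (i + 1) = G * fun ω => Real.exp (l * X (i + 1) ω) := by
        funext ω
        show Real.exp (l * S (i+1) ω - c * Q (i+1) ω) =
          Real.exp (l * S i ω - c * Q (i+1) ω) * Real.exp (l * X (i+1) ω)
        rw [← Real.exp_add, hSsucc ω]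
        ring_nf
      have hmul : μ[M (i + 1) | ℱ i] =ᵐ[μ] G * μ[fun ω => Real.exp (l * X (i + 1) ω) | ℱ i] := by
        rw [hdecomp]
        have hi1 : (i + 1) - 1 = i := by omega
        have := condExp_mul_of_stronglyMeasurable_left hGmeas
          (by rw [← hdecomp]; exact hMint (i + 1))
          (hexpint (i + 1) (Finset.mem_Icc.2 ⟨by omega, by omega⟩))
        exact this
      have hi1 : (i + 1) - 1 = i := by omega
      have hcond := hstep (i + 1) (Finset.mem_Icc.2 ⟨by omega, by omega⟩)
      rw [hi1] at hcond
      refine hmul.le.trans ?_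
      have : G * (μ[fun ω => Real.exp (l * X (i + 1) ω) | ℱ i]) ≤ᵐ[μ] M i := by
        filter_upwards [hcond] with ω hω
        rw [Pi.mul_apply]
        calc G ω * (μ[fun ω => Real.exp (l * X (i + 1) ω) | ℱ i]) ω
            ≤ G ω * Real.exp (c * V (i + 1) ω) :=
              mul_le_mul_of_nonneg_left hω (Real.exp_pos _).le
          _ = M i ω := by
              show Real.exp (l * S i ω - c * Q (i+1) ω) * Real.exp (c * V (i+1) ω) =
                Real.exp (l * S i ω - c * Q i ω)
              rw [← Real.exp_add, hQsucc ω]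
              ring_nf
      exact this
    · -- frozen step
      have hmin : min (i + 1) n = min i n := by omega
      have hMeq : M (i + 1) = M i := by
        funext ω
        show Real.exp (l * (∑ j ∈ Finset.Icc 1 (min (i+1) n), X j ω)
            - c * (∑ j ∈ Finset.Icc 1 (min (i+1) n), V j ω)) = _
        rw [hmin]
      rw [hMeq]
      exact Filter.Eventually.of_forall fun ω =>
        (congrFun (condExp_of_stronglyMeasurable (ℱ.le i) (hMmeas i) (hMint i)) ω).le
  -- optional stopping
  set τ : Ω → ℕ := hittingBtwn S (Set.Ioi x₀) 0 n with hτdef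
  have hτstop : IsStoppingTime ℱ (fun ω => (τ ω : WithTop ℕ)) :=
    Adapted.isStoppingTime_hittingBtwn (fun i => (hSmeas i).measurable) measurableSet_Ioi
  have hτle : ∀ ω, τ ω ≤ n := fun ω => hittingBtwn_le ω
  have hsubm : Submartingale (-M) ℱ μ := hsuper.neg
  have hos := hsubm.expected_stoppedValue_mono (isStoppingTime_const ℱ 0) hτstop
    (fun ω => WithTop.coe_le_coe.2 (Nat.zero_le (τ ω))) (N := n) (fun ω => WithTop.coe_le_coe.2 (hτle ω))
  have hsv0 : stoppedValue (-M) (fun _ => ((0 : ℕ) : WithTop ℕ)) = fun _ => (-1 : ℝ) := by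
    funext ω
    show -(Real.exp (l * (∑ j ∈ Finset.Icc 1 (min 0 n), X j ω)
      - c * (∑ j ∈ Finset.Icc 1 (min 0 n), V j ω))) = -1
    simp
  have hsvneg : stoppedValue (-M) (fun ω => (τ ω : WithTop ℕ)) = fun ω => -stoppedValue M (fun ω => (τ ω : WithTop ℕ)) ω := rfl
  have hint_sv : Integrable (stoppedValue M (fun ω => (τ ω : WithTop ℕ))) μ := by
    have h := (hsubm.integrable_stoppedValue hτstop (fun ω => WithTop.coe_le_coe.2 (hτle ω))).neg
    exact h.congr (Filter.Eventually.of_forall fun ω => by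
      show -(-(M (τ ω) ω)) = M (τ ω) ω
      rw [neg_neg])
  have hsv_le_one : ∫ ω, stoppedValue M (fun ω => (τ ω : WithTop ℕ)) ω ∂μ ≤ 1 := by
    change ∫ x, stoppedValue (-M) (fun _ => ((0 : ℕ) : WithTop ℕ)) x ∂μ ≤ _ at hos
    rw [hsv0, hsvneg] at hos
    simp only [integral_const, measure_univ, probReal_univ, ENNReal.toReal_one, smul_eq_mul, one_mul] at hos
    rw [integral_neg] at hos
    linarith
  -- Markov / conclusion
  set B : Set Ω := {ω | Real.exp t ≤ stoppedValue M (fun ω => (τ ω : WithTop ℕ)) ω} with hBdef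
  have hAB : {ω | (∃ i ∈ Finset.Icc 1 n,
        ∑ j ∈ Finset.Icc 1 i, X j ω > Real.sqrt (2 * ν * t) + (2 / 3) * K * t)
      ∧ ∑ i ∈ Finset.Icc 1 n, (μ[fun ω' => X i ω' ^ 2 | ℱ (i - 1)]) ω ≤ ν} ≤ᵐ[μ] B := by
    filter_upwards [hballV] with ω hV hA
    obtain ⟨⟨i, hi, hSi⟩, hQn⟩ := hA
    rw [Finset.mem_Icc] at hi
    have hSi' : S i ω ∈ Set.Ioi x₀ := by
      show x₀ < ∑ j ∈ Finset.Icc 1 (min i n), X j ω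
      rw [min_eq_left hi.2]
      exact hSi
    have hhit : ∃ j ∈ Set.Icc 0 n, S j ω ∈ Set.Ioi x₀ := ⟨i, ⟨Nat.zero_le _, hi.2⟩, hSi'⟩
    have hmem := stoppedValue_hittingBtwn_mem (u := S) (s := Set.Ioi x₀) hhit
    have hSτ : x₀ < S (τ ω) ω := hmem
    have hQτ : Q (τ ω) ω ≤ ν := by
      have hsub : Finset.Icc 1 (min (τ ω) n) ⊆ Finset.Icc 1 n := by
        apply Finset.Icc_subset_Icc le_rfl
        exact min_le_right _ _
      have h7 : Q (τ ω) ω ≤ ∑ j ∈ Finset.Icc 1 n, V j ω :=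
        Finset.sum_le_sum_of_subset_of_nonneg hsub fun j _ _ => hV j
      exact h7.trans hQn
    show Real.exp t ≤ stoppedValue M (fun ω => (τ ω : WithTop ℕ)) ω
    have h8 : stoppedValue M (fun ω => (τ ω : WithTop ℕ)) ω = Real.exp (l * S (τ ω) ω - c * Q (τ ω) ω) := rfl
    rw [h8]
    apply Real.exp_le_exp.2
    have h1 : l * x₀ ≤ l * S (τ ω) ω := mul_le_mul_of_nonneg_left hSτ.le hl.le
    have h2 : c * Q (τ ω) ω ≤ c * ν := mul_le_mul_of_nonneg_left hQτ hc
    linarith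
  have hμB : μ B ≤ ENNReal.ofReal (Real.exp (-t)) := by
    have hnn : 0 ≤ᵐ[μ] stoppedValue M (fun ω => (τ ω : WithTop ℕ)) :=
      Filter.Eventually.of_forall fun ω => (Real.exp_pos _).le
    have hmarkov := mul_meas_ge_le_integral_of_nonneg hnn hint_sv (Real.exp t)
    have hBt : (μ B).toReal ≤ Real.exp (-t) := by
      have het : 0 < Real.exp t := Real.exp_pos t
      have hmB : Real.exp t * (μ B).toReal ≤ 1 := le_trans hmarkov hsv_le_one
      rw [Real.exp_neg, ← one_div, le_div_iff₀ het]
      linarith [hmB]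
    calc μ B = ENNReal.ofReal (μ B).toReal := (ENNReal.ofReal_toReal (measure_ne_top μ B)).symm
      _ ≤ ENNReal.ofReal (Real.exp (-t)) := ENNReal.ofReal_le_ofReal hBt
  exact le_trans (measure_mono_ae hAB) hμB
end
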